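/- Let a = (a₁,…,aₙ) and b = (b₁,…,bₙ) be integer vectors with a_j > b_j ≥ 0 for all j, and let φ_{a,b}(w) = (w₁^{a₁} conj(w₁)^{b₁}, …, wₙ^{aₙ} conj(wₙ)^{bₙ}). Let f : ℂⁿ → ℂ be continuously real-differentiable and assume that at every point z of the torus (ℂ*)ⁿ = {z : z_j ≠ 0 for all j} the real Fréchet derivative of f (as a map ℝ²ⁿ → ℝ²) is surjective. Then at every point w ∈ (ℂ*)ⁿ the real Fréchet derivative of g = f ∘ φ_{a,b} is surjective; i.e., g has no mixed critical point on (ℂ*)ⁿ. -/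

import Mathlib

open Complex ComplexConjugate

noncomputable def Lmap (c₁ c₂ : ℂ) : ℂ →L[ℝ] ℂ :=
  (ContinuousLinearMap.mul ℝ ℂ c₁) +
    (ContinuousLinearMap.mul ℝ ℂ c₂).comp (Complex.conjCLE.toContinuousLinearMap)

lemma Lmap_apply (c₁ c₂ v : ℂ) : Lmap c₁ c₂ v = c₁ * v + c₂ * conj v := rfl

lemma Lmap_surjective {c₁ c₂ : ℂ} (h : ‖c₂‖ < ‖c₁‖) :
    Function.Surjective (Lmap c₁ c₂) := by
  have hinj : Function.Injective ((Lmap c₁ c₂) : ℂ →ₗ[ℝ] ℂ) := by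
    rw [← LinearMap.ker_eq_bot, LinearMap.ker_eq_bot']
    intro v hv
    by_contra hv0
    have : c₁ * v = -(c₂ * conj v) := by
      have := hv
      simp only [ContinuousLinearMap.coe_coe, Lmap_apply] at this
      linear_combination this
    have habs : ‖c₁‖ * ‖v‖ = ‖c₂‖ * ‖v‖ := by
      have := congrArg norm this
      simpa [map_mul] using this
    have hvpos : 0 < ‖v‖ := by simpa using hv0
    have : ‖c₁‖ = ‖c₂‖ := mul_right_cancel₀ (ne_of_gt hvpos) habs
    linarith
  have := LinearMap.surjective_of_injective hinj
  exact this

lemma hasFDerivAt_mixed (p q : ℕ) (z : ℂ) :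
    HasFDerivAt (fun z : ℂ => z ^ p * conj z ^ q)
      (Lmap ((p : ℂ) * z ^ (p - 1) * conj z ^ q) ((q : ℂ) * z ^ p * conj z ^ (q - 1))) z := by
  have h1 : HasFDerivAt (fun z : ℂ => z ^ p)
      (((1 : ℂ →L[ℂ] ℂ).smulRight ((p : ℂ) * z ^ (p - 1))).restrictScalars ℝ) z :=
    ((hasDerivAt_pow p z).hasFDerivAt).restrictScalars ℝ
  have hc : HasFDerivAt (fun z : ℂ => conj z)
      (Complex.conjCLE.toContinuousLinearMap) z :=
    Complex.conjCLE.hasFDerivAt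
  have h2 : HasFDerivAt (fun z : ℂ => conj z ^ q)
      ((((1 : ℂ →L[ℂ] ℂ).smulRight ((q : ℂ) * conj z ^ (q - 1))).restrictScalars ℝ).comp
        Complex.conjCLE.toContinuousLinearMap) z :=
    (((hasDerivAt_pow q (conj z)).hasFDerivAt).restrictScalars ℝ).comp z hc
  have := h1.mul h2
  refine this.congr_fderiv ?_
  ext v
  simp [Lmap, Complex.conjCLE]
  ring

/-- If `f` is continuously real-differentiable and has no mixed critical point on the
torus `(ℂ*)ⁿ`, then the pull-back `g = f ∘ φ_{a,b}` under the mixed covering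
`φ_{a,b}(w) = (w₁^{a₁} conj(w₁)^{b₁}, …, wₙ^{aₙ} conj(wₙ)^{bₙ})` (with `a_j > b_j ≥ 0`)
has no mixed critical point on `(ℂ*)ⁿ` either. -/
theorem mixedPullback_no_critical_point_on_torus (n : ℕ)
    (a b : Fin n → ℕ) (hab : ∀ j, b j < a j)
    (f : (Fin n → ℂ) → ℂ) (hf : ContDiff ℝ 1 f)
    (hreg : ∀ z : Fin n → ℂ, (∀ j, z j ≠ 0) → Function.Surjective (fderiv ℝ f z)) :
    ∀ w : Fin n → ℂ, (∀ j, w j ≠ 0) →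
      Function.Surjective
        (fderiv ℝ (fun w : Fin n → ℂ => f (fun j => w j ^ (a j) * conj (w j) ^ (b j))) w) := by
  intro w hw
  set c₁ : Fin n → ℂ := fun j => (a j : ℂ) * w j ^ (a j - 1) * conj (w j) ^ (b j) with hc₁
  set c₂ : Fin n → ℂ := fun j => (b j : ℂ) * w j ^ (a j) * conj (w j) ^ (b j - 1) with hc₂
  set φ : (Fin n → ℂ) → (Fin n → ℂ) := fun w j => w j ^ (a j) * conj (w j) ^ (b j) with hφ
  set Dφ : (Fin n → ℂ) →L[ℝ] (Fin n → ℂ) :=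
    ContinuousLinearMap.pi (fun j => (Lmap (c₁ j) (c₂ j)).comp (ContinuousLinearMap.proj j))
    with hDφ
  have hφd : HasFDerivAt φ Dφ w := by
    rw [hasFDerivAt_pi']
    intro j
    have hj : HasFDerivAt (fun w : Fin n → ℂ => w j ^ (a j) * conj (w j) ^ (b j))
        ((Lmap (c₁ j) (c₂ j)).comp (ContinuousLinearMap.proj j)) w :=
      (hasFDerivAt_mixed (a j) (b j) (w j)).comp (g := fun z : ℂ => z ^ (a j) * conj z ^ (b j)) w
        (hasFDerivAt_apply j w)
    exact hj
  -- surjectivity of each component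
  have hsurj_j : ∀ j, Function.Surjective (Lmap (c₁ j) (c₂ j)) := by
    intro j
    apply Lmap_surjective
    have hz : 0 < ‖(w j)‖ := by simpa using hw j
    have e1 : ‖(c₁ j)‖ = (a j) * ‖(w j)‖ ^ (a j - 1 + b j) := by
      simp [hc₁, map_mul, map_pow, pow_add]; ring
    have e2 : ‖(c₂ j)‖ = (b j) * ‖(w j)‖ ^ (a j + (b j - 1)) := by
      simp [hc₂, map_mul, map_pow, pow_add]; ring
    rw [e1, e2]
    rcases Nat.eq_zero_or_pos (b j) with hb | hb
    · have ha : (0:ℝ) < (a j) := by exact_mod_cast Nat.lt_of_le_of_lt (Nat.zero_le _) (hab j)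
      have : (0:ℝ) < (a j) * ‖(w j)‖ ^ (a j - 1 + b j) :=
        mul_pos ha (pow_pos hz _)
      simpa [hb] using this
    · have hexp : a j + (b j - 1) = a j - 1 + b j := by have := hab j; omega
      rw [hexp]
      have : ((b j : ℝ)) < (a j : ℝ) := by exact_mod_cast hab j
      exact mul_lt_mul_of_pos_right this (pow_pos hz _)
  have hDφ_surj : Function.Surjective Dφ := by
    intro u
    choose v hv using fun j => hsurj_j j (u j)
    exact ⟨v, funext fun j => hv j⟩
  have hφw : ∀ j, φ w j ≠ 0 := by
    intro j
    have ha : a j ≠ 0 := by have := hab j; omega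
    simp only [hφ]
    exact mul_ne_zero (pow_ne_zero _ (hw j)) (pow_ne_zero _ (by simpa using hw j))
  have hfd : HasFDerivAt f (fderiv ℝ f (φ w)) (φ w) :=
    (hf.differentiable one_ne_zero (φ w)).hasFDerivAt
  have hcomp : HasFDerivAt (fun w : Fin n → ℂ => f (fun j => w j ^ (a j) * conj (w j) ^ (b j)))
      ((fderiv ℝ f (φ w)).comp Dφ) w := hfd.comp w hφd
  rw [hcomp.fderiv]
  exact (hreg (φ w) hφw).comp hDφ_surj
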